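/- The set of extreme points of the binary classical polytope (the set of classical binary two-party behaviours, viewed as a convex subset of ℝ^16) consists of exactly 12 points: the deterministic behaviours p(a,b|x,y) = 1 if a = μ·y ⊕ α and b = ν·x ⊕ β (and 0 otherwise), for α, β, μ, ν ∈ {0,1} with μ and ν not both equal to 1, where ⊕ denotes addition mod 2. -/

import Mathlib

open Finset

/-! Auxiliary definitions -/

abbrev BPt := Fin 2 → Fin 2 → Fin 2 → Fin 2 → ℝ

def detPt (α β μ ν : Fin 2) : BPt :=
  fun a b x y => if a = μ * y + α ∧ b = ν * x + β then (1 : ℝ) else 0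

def Sset : Set BPt :=
  {p | ∃ (q : ℝ) (p₁ : Fin 2 → ℝ) (p₂ : Fin 2 → Fin 2 → Fin 2 → ℝ)
          (p₃ : Fin 2 → Fin 2 → Fin 2 → ℝ) (p₄ : Fin 2 → ℝ),
          0 ≤ q ∧ q ≤ 1 ∧
          (∀ a, 0 ≤ p₁ a) ∧ (∑ a, p₁ a = 1) ∧
          (∀ b a x, 0 ≤ p₂ b a x) ∧ (∀ a x, ∑ b, p₂ b a x = 1) ∧
          (∀ a b y, 0 ≤ p₃ a b y) ∧ (∀ b y, ∑ a, p₃ a b y = 1) ∧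
          (∀ b, 0 ≤ p₄ b) ∧ (∑ b, p₄ b = 1) ∧
          (∀ a b x y,
            p a b x y = q * p₁ a * p₂ b a x + (1 - q) * p₃ a b y * p₄ b)}

def Dset : Set BPt :=
  {p | ∃ α β μ ν : Fin 2, ¬(μ = 1 ∧ ν = 1) ∧ p = fun a b x y =>
          if a = μ * y + α ∧ b = ν * x + β then (1 : ℝ) else 0}

lemma detPt_mem_Dset {α β μ ν : Fin 2} (h : ¬(μ = 1 ∧ ν = 1)) :
    detPt α β μ ν ∈ Dset := ⟨α, β, μ, ν, h, rfl⟩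

/-! Sum lemmas -/

lemma auxA1 (p₁ : Fin 2 → ℝ) (p₂ : Fin 2 → Fin 2 → Fin 2 → ℝ)
    (h1 : p₁ 0 + p₁ 1 = 1) (h2 : ∀ a x, p₂ 0 a x + p₂ 1 a x = 1) :
    ∑ α : Fin 2, ∑ β : Fin 2, ∑ ν : Fin 2,
      p₁ α * p₂ β α 0 * p₂ (ν + β) α 1 = 1 := by
  simp +decide [Fin.sum_univ_two]
  linear_combination p₁ 0 * (p₂ 0 0 1 + p₂ 1 0 1) * h2 0 0 + p₁ 0 * h2 0 1 +
    p₁ 1 * (p₂ 0 1 1 + p₂ 1 1 1) * h2 1 0 + p₁ 1 * h2 1 1 + h1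

lemma auxA (p₁ : Fin 2 → ℝ) (p₂ : Fin 2 → Fin 2 → Fin 2 → ℝ)
    (h2 : ∀ a x, p₂ 0 a x + p₂ 1 a x = 1) (a b x : Fin 2) :
    ∑ α : Fin 2, ∑ β : Fin 2, ∑ ν : Fin 2,
      p₁ α * p₂ β α 0 * p₂ (ν + β) α 1 * (if a = α ∧ b = ν * x + β then (1:ℝ) else 0)
      = p₁ a * p₂ b a x := by
  fin_cases a <;> fin_cases b <;> fin_cases x <;>
    simp +decide [Fin.sum_univ_two] <;>
    first
      | linear_combination p₁ 0 * p₂ 0 0 0 * h2 0 1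
      | linear_combination p₁ 0 * p₂ 1 0 0 * h2 0 1
      | linear_combination p₁ 1 * p₂ 0 1 0 * h2 1 1
      | linear_combination p₁ 1 * p₂ 1 1 0 * h2 1 1
      | linear_combination p₁ 0 * p₂ 0 0 1 * h2 0 0
      | linear_combination p₁ 0 * p₂ 1 0 1 * h2 0 0
      | linear_combination p₁ 1 * p₂ 0 1 1 * h2 1 0
      | linear_combination p₁ 1 * p₂ 1 1 1 * h2 1 0


lemma fin2_cases (i : Fin 2) : i = 0 ∨ i = 1 := by omega

lemma fin2_le_one {f : Fin 2 → ℝ} (h0 : ∀ i, 0 ≤ f i) (hs : f 0 + f 1 = 1) (i : Fin 2) :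
    f i ≤ 1 := by
  rcases fin2_cases i with h | h <;> subst h <;> [linarith [h0 1]; linarith [h0 0]]

/-! Coordinates of members of `Sset` lie in `[0,1]`. -/

lemma Sset_bounds {p : BPt} (hp : p ∈ Sset) (a b x y : Fin 2) :
    0 ≤ p a b x y ∧ p a b x y ≤ 1 := by
  obtain ⟨q, p₁, p₂, p₃, p₄, hq0, hq1, h1n, h1s, h2n, h2s, h3n, h3s, h4n, h4s, hp⟩ := hp
  have e1 : p₁ 0 + p₁ 1 = 1 := by simpa [Fin.sum_univ_two] using h1s
  have e2 : ∀ a x, p₂ 0 a x + p₂ 1 a x = 1 := by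
    intro a x; simpa [Fin.sum_univ_two] using h2s a x
  have e3 : ∀ b y, p₃ 0 b y + p₃ 1 b y = 1 := by
    intro b y; simpa [Fin.sum_univ_two] using h3s b y
  have e4 : p₄ 0 + p₄ 1 = 1 := by simpa [Fin.sum_univ_two] using h4s
  have u1 : p₁ a ≤ 1 := fin2_le_one h1n e1 a
  have u2 : p₂ b a x ≤ 1 := fin2_le_one (fun i => h2n i a x) (e2 a x) b
  have u3 : p₃ a b y ≤ 1 := fin2_le_one (fun i => h3n i b y) (e3 b y) a
  have u4 : p₄ b ≤ 1 := fin2_le_one h4n e4 b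
  rw [hp]
  constructor
  · have := h1n a; have := h2n b a x; have := h3n a b y; have := h4n b
    have : 0 ≤ q * p₁ a * p₂ b a x := by positivity
    have h1q : (0:ℝ) ≤ 1 - q := by linarith
    have : 0 ≤ (1 - q) * p₃ a b y * p₄ b := by positivity
    linarith
  · have w1 : p₁ a * p₂ b a x ≤ 1 := by nlinarith [h1n a, h2n b a x]
    have w2 : p₃ a b y * p₄ b ≤ 1 := by nlinarith [h3n a b y, h4n b]
    nlinarith [h1n a, h2n b a x, h3n a b y, h4n b,
      mul_nonneg (h1n a) (h2n b a x), mul_nonneg (h3n a b y) (h4n b)]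

/-! Bob-side sum lemmas -/

lemma auxB1 (p₄ : Fin 2 → ℝ) (p₃ : Fin 2 → Fin 2 → Fin 2 → ℝ)
    (h4 : p₄ 0 + p₄ 1 = 1) (h3 : ∀ b y, p₃ 0 b y + p₃ 1 b y = 1) :
    ∑ α : Fin 2, ∑ β : Fin 2, ∑ μ : Fin 2,
      p₄ β * p₃ α β 0 * p₃ (μ + α) β 1 = 1 := by
  simp +decide [Fin.sum_univ_two]
  linear_combination p₄ 0 * (p₃ 0 0 1 + p₃ 1 0 1) * h3 0 0 + p₄ 0 * h3 0 1 +
    p₄ 1 * (p₃ 0 1 1 + p₃ 1 1 1) * h3 1 0 + p₄ 1 * h3 1 1 + h4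

lemma auxB (p₄ : Fin 2 → ℝ) (p₃ : Fin 2 → Fin 2 → Fin 2 → ℝ)
    (h3 : ∀ b y, p₃ 0 b y + p₃ 1 b y = 1) (a b y : Fin 2) :
    ∑ α : Fin 2, ∑ β : Fin 2, ∑ μ : Fin 2,
      p₄ β * p₃ α β 0 * p₃ (μ + α) β 1 * (if a = μ * y + α ∧ b = β then (1:ℝ) else 0)
      = p₃ a b y * p₄ b := by
  fin_cases a <;> fin_cases b <;> fin_cases y <;>
    simp +decide [Fin.sum_univ_two] <;>
    first
      | linear_combination p₄ 0 * p₃ 0 0 0 * h3 0 1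
      | linear_combination p₄ 0 * p₃ 1 0 0 * h3 0 1
      | linear_combination p₄ 1 * p₃ 0 1 0 * h3 1 1
      | linear_combination p₄ 1 * p₃ 1 1 0 * h3 1 1
      | linear_combination p₄ 0 * p₃ 0 0 1 * h3 0 0
      | linear_combination p₄ 0 * p₃ 1 0 1 * h3 0 0
      | linear_combination p₄ 1 * p₃ 0 1 1 * h3 1 0
      | linear_combination p₄ 1 * p₃ 1 1 1 * h3 1 0

/-! `Dset ⊆ Sset` -/

lemma Dset_subset_Sset : Dset ⊆ Sset := by
  rintro p ⟨α, β, μ, ν, hμν, rfl⟩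
  by_cases hμ : μ = 0
  · subst hμ
    refine ⟨1, (fun a => if a = α then 1 else 0),
      (fun b a x => if b = ν * x + β then 1 else 0),
      (fun a b y => if a = α then 1 else 0),
      (fun b => if b = β then 1 else 0),
      zero_le_one, le_refl 1,
      fun a => by positivity,
      by simp [Finset.sum_ite_eq'],
      fun b a x => by positivity,
      fun a x => by simp [Finset.sum_ite_eq'],
      fun a b y => by positivity,
      fun b y => by simp [Finset.sum_ite_eq'],
      fun b => by positivity,
      by simp [Finset.sum_ite_eq'],
      fun a b x y => ?_⟩
    by_cases h1 : a = α <;> by_cases h2 : b = ν * x + β <;>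
      simp [h1, h2]
  · have hμ1 : μ = 1 := by omega
    have hν : ν = 0 := by
      rcases fin2_cases ν with h | h
      · exact h
      · exact absurd ⟨hμ1, h⟩ hμν
    subst hμ1; subst hν
    refine ⟨0, (fun a => if a = α then 1 else 0),
      (fun b a x => if b = β then 1 else 0),
      (fun a b y => if a = 1 * y + α then 1 else 0),
      (fun b => if b = β then 1 else 0),
      le_refl 0, zero_le_one,
      fun a => by positivity,
      by simp [Finset.sum_ite_eq'],
      fun b a x => by positivity,
      fun a x => by simp [Finset.sum_ite_eq'],
      fun a b y => by positivity,
      fun b y => by simp [Finset.sum_ite_eq'],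
      fun b => by positivity,
      by simp [Finset.sum_ite_eq'],
      fun a b x y => ?_⟩
    by_cases h1 : a = 1 * y + α <;> by_cases h2 : b = β <;>
      simp [h1, h2]

/-! `Sset ⊆ convexHull ℝ Dset` -/

lemma Sset_subset_hull : Sset ⊆ convexHull ℝ Dset := by
  rintro p ⟨q, p₁, p₂, p₃, p₄, hq0, hq1, h1n, h1s, h2n, h2s, h3n, h3s, h4n, h4s, hp⟩
  have e1 : p₁ 0 + p₁ 1 = 1 := by simpa [Fin.sum_univ_two] using h1s
  have e2 : ∀ a x, p₂ 0 a x + p₂ 1 a x = 1 := fun a x => by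
    simpa [Fin.sum_univ_two] using h2s a x
  have e3 : ∀ b y, p₃ 0 b y + p₃ 1 b y = 1 := fun b y => by
    simpa [Fin.sum_univ_two] using h3s b y
  have e4 : p₄ 0 + p₄ 1 = 1 := by simpa [Fin.sum_univ_two] using h4s
  have hA : (fun a b x y => p₁ a * p₂ b a x : BPt) ∈ convexHull ℝ Dset := by
    apply mem_convexHull_of_exists_fintype
      (w := fun i : Fin 2 × Fin 2 × Fin 2 => p₁ i.1 * p₂ i.2.1 i.1 0 * p₂ (i.2.2 + i.2.1) i.1 1)
      (z := fun i => detPt i.1 i.2.1 0 i.2.2)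
    · exact fun i => mul_nonneg (mul_nonneg (h1n _) (h2n _ _ _)) (h2n _ _ _)
    · simp only [Fintype.sum_prod_type]
      exact auxA1 p₁ p₂ e1 e2
    · exact fun i => detPt_mem_Dset (by simp)
    · funext a b x y
      simp only [Finset.sum_apply, Pi.smul_apply, smul_eq_mul, detPt,
        Fintype.sum_prod_type, zero_mul, zero_add]
      exact auxA p₁ p₂ e2 a b x
  have hB : (fun a b x y => p₃ a b y * p₄ b : BPt) ∈ convexHull ℝ Dset := by
    apply mem_convexHull_of_exists_fintype
      (w := fun i : Fin 2 × Fin 2 × Fin 2 => p₄ i.2.1 * p₃ i.1 i.2.1 0 * p₃ (i.2.2 + i.1) i.2.1 1)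
      (z := fun i => detPt i.1 i.2.1 i.2.2 0)
    · exact fun i => mul_nonneg (mul_nonneg (h4n _) (h3n _ _ _)) (h3n _ _ _)
    · simp only [Fintype.sum_prod_type]
      rw [show (∑ α : Fin 2, ∑ β : Fin 2, ∑ μ : Fin 2,
        p₄ β * p₃ α β 0 * p₃ (μ + α) β 1) = 1 from auxB1 p₄ p₃ e4 e3]
    · exact fun i => detPt_mem_Dset (by simp)
    · funext a b x y
      simp only [Finset.sum_apply, Pi.smul_apply, smul_eq_mul, detPt,
        Fintype.sum_prod_type, zero_mul, zero_add]
      exact auxB p₄ p₃ e3 a b y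
  have key := (convex_convexHull ℝ Dset) hA hB hq0 (by linarith : (0:ℝ) ≤ 1 - q)
    (by ring)
  have hpeq : p = q • (fun a b x y => p₁ a * p₂ b a x : BPt)
      + (1 - q) • (fun a b x y => p₃ a b y * p₄ b : BPt) := by
    funext a b x y
    simp only [Pi.add_apply, Pi.smul_apply, smul_eq_mul]
    rw [hp a b x y]; ring
  rw [hpeq]; exact key

/-! Convexity of `Sset` -/

set_option maxHeartbeats 1000000 in
lemma Sset_convex : Convex ℝ Sset := by
  rintro p hp p' hp' c d hc hd hcd
  obtain ⟨q₁, f1, f2, f3, f4, hq₁0, hq₁1, hf1n, hf1s, hf2n, hf2s, hf3n, hf3s,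
    hf4n, hf4s, hfp⟩ := hp
  obtain ⟨q₂, g1, g2, g3, g4, hq₂0, hq₂1, hg1n, hg1s, hg2n, hg2s, hg3n, hg3s,
    hg4n, hg4s, hgp⟩ := hp'
  have ef1 : f1 0 + f1 1 = 1 := by simpa [Fin.sum_univ_two] using hf1s
  have ef2 : ∀ a x, f2 0 a x + f2 1 a x = 1 := fun a x => by
    simpa [Fin.sum_univ_two] using hf2s a x
  have ef3 : ∀ b y, f3 0 b y + f3 1 b y = 1 := fun b y => by
    simpa [Fin.sum_univ_two] using hf3s b y
  have ef4 : f4 0 + f4 1 = 1 := by simpa [Fin.sum_univ_two] using hf4s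
  have eg1 : g1 0 + g1 1 = 1 := by simpa [Fin.sum_univ_two] using hg1s
  have eg2 : ∀ a x, g2 0 a x + g2 1 a x = 1 := fun a x => by
    simpa [Fin.sum_univ_two] using hg2s a x
  have eg3 : ∀ b y, g3 0 b y + g3 1 b y = 1 := fun b y => by
    simpa [Fin.sum_univ_two] using hg3s b y
  have eg4 : g4 0 + g4 1 = 1 := by simpa [Fin.sum_univ_two] using hg4s
  set q : ℝ := c * q₁ + d * q₂ with hqdef
  set A : Fin 2 → ℝ := fun a => c * q₁ * f1 a + d * q₂ * g1 a with hAdef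
  set B : Fin 2 → Fin 2 → Fin 2 → ℝ :=
    fun b a x => c * q₁ * f1 a * f2 b a x + d * q₂ * g1 a * g2 b a x with hBdef
  set D4 : Fin 2 → ℝ := fun b => c * (1 - q₁) * f4 b + d * (1 - q₂) * g4 b with hDdef
  set C : Fin 2 → Fin 2 → Fin 2 → ℝ :=
    fun a b y => c * (1 - q₁) * f3 a b y * f4 b + d * (1 - q₂) * g3 a b y * g4 b with hCdef
  have hq0 : 0 ≤ q := add_nonneg (mul_nonneg hc hq₁0) (mul_nonneg hd hq₂0)
  have hq1' : q ≤ 1 := by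
    rw [hqdef]
    nlinarith [mul_nonneg hc (by linarith : (0:ℝ) ≤ 1 - q₁),
      mul_nonneg hd (by linarith : (0:ℝ) ≤ 1 - q₂)]
  have hA0 : ∀ a, 0 ≤ A a := fun a =>
    add_nonneg (mul_nonneg (mul_nonneg hc hq₁0) (hf1n a))
      (mul_nonneg (mul_nonneg hd hq₂0) (hg1n a))
  have hAq : A 0 + A 1 = q := by
    simp only [hAdef, hqdef]
    linear_combination c * q₁ * ef1 + d * q₂ * eg1
  have hB0 : ∀ b a x, 0 ≤ B b a x := fun b a x =>
    add_nonneg (mul_nonneg (mul_nonneg (mul_nonneg hc hq₁0) (hf1n a)) (hf2n b a x))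
      (mul_nonneg (mul_nonneg (mul_nonneg hd hq₂0) (hg1n a)) (hg2n b a x))
  have hBA : ∀ a x, B 0 a x + B 1 a x = A a := fun a x => by
    simp only [hBdef, hAdef]
    linear_combination c * q₁ * f1 a * ef2 a x + d * q₂ * g1 a * eg2 a x
  have hD0 : ∀ b, 0 ≤ D4 b := fun b =>
    add_nonneg (mul_nonneg (mul_nonneg hc (by linarith)) (hf4n b))
      (mul_nonneg (mul_nonneg hd (by linarith)) (hg4n b))
  have hDq : D4 0 + D4 1 = 1 - q := by
    simp only [hDdef, hqdef]
    linear_combination c * (1 - q₁) * ef4 + d * (1 - q₂) * eg4 + hcd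
  have hC0 : ∀ a b y, 0 ≤ C a b y := fun a b y =>
    add_nonneg (mul_nonneg (mul_nonneg (mul_nonneg hc (by linarith)) (hf3n a b y)) (hf4n b))
      (mul_nonneg (mul_nonneg (mul_nonneg hd (by linarith)) (hg3n a b y)) (hg4n b))
  have hCD : ∀ b y, C 0 b y + C 1 b y = D4 b := fun b y => by
    simp only [hCdef, hDdef]
    linear_combination c * (1 - q₁) * f4 b * ef3 b y + d * (1 - q₂) * g4 b * eg3 b y
  refine ⟨q,
    (fun a => if q = 0 then 1/2 else A a / q),
    (fun b a x => if A a = 0 then 1/2 else B b a x / A a),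
    (fun a b y => if D4 b = 0 then 1/2 else C a b y / D4 b),
    (fun b => if 1 - q = 0 then 1/2 else D4 b / (1 - q)),
    hq0, hq1', ?_, ?_, ?_, ?_, ?_, ?_, ?_, ?_, ?_⟩
  · intro a; dsimp only; split_ifs
    · norm_num
    · exact div_nonneg (hA0 a) hq0
  · rw [Fin.sum_univ_two]; split_ifs with h
    · norm_num
    · field_simp; linarith [hAq]
  · intro b a x; dsimp only; split_ifs
    · norm_num
    · exact div_nonneg (hB0 b a x) (hA0 a)
  · intro a x; rw [Fin.sum_univ_two]; dsimp only; split_ifs with h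
    · norm_num
    · field_simp; linarith [hBA a x]
  · intro a b y; dsimp only; split_ifs
    · norm_num
    · exact div_nonneg (hC0 a b y) (hD0 b)
  · intro b y; rw [Fin.sum_univ_two]; dsimp only; split_ifs with h
    · norm_num
    · field_simp; linarith [hCD b y]
  · intro b; dsimp only; split_ifs
    · norm_num
    · exact div_nonneg (hD0 b) (by linarith [hq1'] : (0:ℝ) ≤ 1 - q)
  · rw [Fin.sum_univ_two]; split_ifs with h
    · norm_num
    · field_simp; linarith [hDq]
  · intro a b x y
    dsimp only
    have e1 : q * (if q = 0 then 1/2 else A a / q) *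
        (if A a = 0 then 1/2 else B b a x / A a) = B b a x := by
      rcases eq_or_ne q 0 with h | h
      · have h' : c * q₁ + d * q₂ = 0 := by rw [← hqdef]; exact h
        have h1 : c * q₁ = 0 := by
          linarith [mul_nonneg hc hq₁0, mul_nonneg hd hq₂0]
        have h2 : d * q₂ = 0 := by
          linarith [mul_nonneg hc hq₁0, mul_nonneg hd hq₂0]
        have hB' : B b a x = 0 := by
          simp only [hBdef]
          linear_combination f1 a * f2 b a x * h1 + g1 a * g2 b a x * h2
        simp [h, hB']
      · rcases eq_or_ne (A a) 0 with hA' | hA'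
        · have hB' : B b a x = 0 := by
            rcases fin2_cases b with hb | hb <;> subst hb <;>
              linarith [hBA a x, hB0 0 a x, hB0 1 a x, hA']
          simp [h, hA', hB']
        · rw [if_neg h, if_neg hA']; field_simp
    have e2 : (1 - q) * (if D4 b = 0 then 1/2 else C a b y / D4 b) *
        (if 1 - q = 0 then 1/2 else D4 b / (1 - q)) = C a b y := by
      have hsum : c * (1 - q₁) + d * (1 - q₂) = 1 - q := by
        rw [hqdef]; linear_combination hcd
      rcases eq_or_ne (1 - q) 0 with h | h
      · have h1 : c * (1 - q₁) = 0 := by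
          nlinarith [mul_nonneg hc (by linarith : (0:ℝ) ≤ 1 - q₁),
            mul_nonneg hd (by linarith : (0:ℝ) ≤ 1 - q₂)]
        have h2 : d * (1 - q₂) = 0 := by
          nlinarith [mul_nonneg hc (by linarith : (0:ℝ) ≤ 1 - q₁),
            mul_nonneg hd (by linarith : (0:ℝ) ≤ 1 - q₂)]
        have hC' : C a b y = 0 := by
          simp only [hCdef]
          linear_combination f3 a b y * f4 b * h1 + g3 a b y * g4 b * h2
        simp [h, hC']
      · rcases eq_or_ne (D4 b) 0 with hD' | hD'
        · have hC' : C a b y = 0 := by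
            rcases fin2_cases a with ha | ha <;> subst ha <;>
              linarith [hCD b y, hC0 0 b y, hC0 1 b y, hD']
          simp [h, hD', hC']
        · rw [if_neg hD', if_neg h]; field_simp
    show (c • p + d • p') a b x y = _
    simp only [Pi.add_apply, Pi.smul_apply, smul_eq_mul]
    rw [e1, e2, hfp a b x y, hgp a b x y]
    simp only [hBdef, hCdef, hqdef]
    ring

/-! Every element of `Dset` is an extreme point of `Sset`. -/

lemma seg_extreme {c e u v t : ℝ} (hc : 0 < c) (he : 0 < e) (hce : c + e = 1)
    (hu0 : 0 ≤ u) (hu1 : u ≤ 1) (hv0 : 0 ≤ v) (hv1 : v ≤ 1)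
    (h : c * u + e * v = t) (ht : t = 0 ∨ t = 1) : u = t ∧ v = t := by
  have h1 := mul_le_mul_of_nonneg_left hu1 hc.le
  have h2 := mul_le_mul_of_nonneg_left hv1 he.le
  have h3 := mul_nonneg hc.le hu0
  have h4 := mul_nonneg he.le hv0
  rcases ht with rfl | rfl
  · have hcu : c * u = 0 := by linarith
    have hev : e * v = 0 := by linarith
    constructor
    · exact (mul_eq_zero.mp hcu).resolve_left hc.ne'
    · exact (mul_eq_zero.mp hev).resolve_left he.ne'
  · have hcu : c * (1 - u) = 0 := by linarith
    have hev : e * (1 - v) = 0 := by linarith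
    constructor
    · have := (mul_eq_zero.mp hcu).resolve_left hc.ne'; linarith
    · have := (mul_eq_zero.mp hev).resolve_left he.ne'; linarith

lemma Dset_subset_extreme : Dset ⊆ Sset.extremePoints ℝ := by
  intro p hd
  refine ⟨Dset_subset_Sset hd, fun u hu v hv hseg => ?_⟩
  obtain ⟨α, β, μ, ν, hμν, rfl⟩ := hd
  obtain ⟨c, e, hc, he, hce, hsum⟩ := hseg
  have key : ∀ a b x y : Fin 2,
      u a b x y = (if a = μ * y + α ∧ b = ν * x + β then (1:ℝ) else 0) ∧
      v a b x y = (if a = μ * y + α ∧ b = ν * x + β then (1:ℝ) else 0) := by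
    intro a b x y
    have h := congrFun (congrFun (congrFun (congrFun hsum a) b) x) y
    simp only [Pi.add_apply, Pi.smul_apply, smul_eq_mul] at h
    obtain ⟨hu0, hu1⟩ := Sset_bounds hu a b x y
    obtain ⟨hv0, hv1⟩ := Sset_bounds hv a b x y
    have ht : (if a = μ * y + α ∧ b = ν * x + β then (1:ℝ) else 0) = 0 ∨
        (if a = μ * y + α ∧ b = ν * x + β then (1:ℝ) else 0) = 1 := by
      split_ifs <;> simp
    exact seg_extreme hc he hce hu0 hu1 hv0 hv1 h ht
  funext a b x y; exact (key a b x y).1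

/-! Injectivity of `detPt` and cardinality of `Dset`. -/

lemma detPt_param_inj : ∀ α₁ β₁ μ₁ ν₁ α₂ β₂ μ₂ ν₂ : Fin 2,
    (∀ a b x y : Fin 2,
      ((a = μ₁ * y + α₁ ∧ b = ν₁ * x + β₁) ↔ (a = μ₂ * y + α₂ ∧ b = ν₂ * x + β₂))) →
    α₁ = α₂ ∧ β₁ = β₂ ∧ μ₁ = μ₂ ∧ ν₁ = ν₂ := by decide

lemma detPt_injective :
    Function.Injective (fun i : Fin 2 × Fin 2 × Fin 2 × Fin 2 =>
      detPt i.1 i.2.1 i.2.2.1 i.2.2.2) := by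
  rintro ⟨α₁, β₁, μ₁, ν₁⟩ ⟨α₂, β₂, μ₂, ν₂⟩ h
  simp only at h
  have key : ∀ a b x y : Fin 2,
      ((a = μ₁ * y + α₁ ∧ b = ν₁ * x + β₁) ↔ (a = μ₂ * y + α₂ ∧ b = ν₂ * x + β₂)) := by
    intro a b x y
    have h' := congrFun (congrFun (congrFun (congrFun h a) b) x) y
    simp only [detPt] at h'
    constructor <;> intro hcond
    · by_contra h2
      rw [if_pos hcond, if_neg h2] at h'
      norm_num at h'
    · by_contra h1
      rw [if_neg h1, if_pos hcond] at h'
      norm_num at h'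
  obtain ⟨e1, e2, e3, e4⟩ := detPt_param_inj α₁ β₁ μ₁ ν₁ α₂ β₂ μ₂ ν₂ key
  simp [e1, e2, e3, e4]

lemma Dset_ncard : Dset.ncard = 12 := by
  classical
  have h : Dset = ↑(((Finset.univ : Finset (Fin 2 × Fin 2 × Fin 2 × Fin 2)).filter
      (fun i => ¬(i.2.2.1 = 1 ∧ i.2.2.2 = 1))).image
      (fun i => detPt i.1 i.2.1 i.2.2.1 i.2.2.2)) := by
    ext p
    simp only [Finset.coe_image, Set.mem_image, Finset.mem_coe, Finset.mem_filter,
      Finset.mem_univ, true_and, Dset, Set.mem_setOf_eq]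
    constructor
    · rintro ⟨α, β, μ, ν, hh, rfl⟩
      exact ⟨(α, β, μ, ν), hh, rfl⟩
    · rintro ⟨⟨α, β, μ, ν⟩, hh, rfl⟩
      exact ⟨α, β, μ, ν, hh, rfl⟩
  rw [h, Set.ncard_coe_finset, Finset.card_image_of_injective _ detPt_injective]
  decide

/-! Main theorem -/

theorem extremePoints_binary_classical_polytope' :
    Sset.extremePoints ℝ = Dset ∧ Dset.ncard = 12 := by
  constructor
  · apply Set.Subset.antisymm
    · have hSeq : Sset = convexHull ℝ Dset :=
        Set.Subset.antisymm Sset_subset_hull (convexHull_min Dset_subset_Sset Sset_convex)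
      rw [hSeq]
      exact extremePoints_convexHull_subset
    · exact Dset_subset_extreme
  · exact Dset_ncard

/-- The extreme points of the binary classical polytope are exactly
the 12 deterministic behaviours `p(a,b|x,y) = 1` iff `a = μ·y ⊕ α`, `b = ν·x ⊕ β`
with `μ`, `ν` not both `1`. (Here `Fin 2` arithmetic is mod 2.) -/
theorem extremePoints_binary_classical_polytope :
    ({p : Fin 2 → Fin 2 → Fin 2 → Fin 2 → ℝ |
        ∃ (q : ℝ) (p₁ : Fin 2 → ℝ) (p₂ : Fin 2 → Fin 2 → Fin 2 → ℝ)
          (p₃ : Fin 2 → Fin 2 → Fin 2 → ℝ) (p₄ : Fin 2 → ℝ),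
          0 ≤ q ∧ q ≤ 1 ∧
          (∀ a, 0 ≤ p₁ a) ∧ (∑ a, p₁ a = 1) ∧
          (∀ b a x, 0 ≤ p₂ b a x) ∧ (∀ a x, ∑ b, p₂ b a x = 1) ∧
          (∀ a b y, 0 ≤ p₃ a b y) ∧ (∀ b y, ∑ a, p₃ a b y = 1) ∧
          (∀ b, 0 ≤ p₄ b) ∧ (∑ b, p₄ b = 1) ∧
          (∀ a b x y,
            p a b x y = q * p₁ a * p₂ b a x + (1 - q) * p₃ a b y * p₄ b)
      }.extremePoints ℝ
      =
      {p : Fin 2 → Fin 2 → Fin 2 → Fin 2 → ℝ |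
        ∃ α β μ ν : Fin 2, ¬(μ = 1 ∧ ν = 1) ∧ p = fun a b x y =>
          if a = μ * y + α ∧ b = ν * x + β then (1 : ℝ) else 0})
    ∧
    ({p : Fin 2 → Fin 2 → Fin 2 → Fin 2 → ℝ |
        ∃ α β μ ν : Fin 2, ¬(μ = 1 ∧ ν = 1) ∧ p = fun a b x y =>
          if a = μ * y + α ∧ b = ν * x + β then (1 : ℝ) else 0}).ncard = 12 := by
  exact extremePoints_binary_classical_polytope'
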